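/- Let U ⊆ ℂ be open and η ∈ U. Let y, ŷ, z, ẑ, Y, Ŷ, Z, Ẑ : U → ℂ be functions with y(η)ŷ(η) + z(η)ẑ(η) = 1 and y(η) ≠ 0, and set ρ = yŶ + zẐ and κ = ŷẐ − ẑŶ (pointwise). Assume ρ(η) = 0, ρ is differentiable at η with ρ′(η) ≠ 0, and ρ(ζ) ≠ 0 for ζ ∈ U \ {η}. Let E : U → ℂ with E(η) ≠ 0, let d : U → ℂ² be given, and let e : U → ℂ² be continuous at η and satisfy e(η) = ρ(η)c − κ(η)E(η)d(η) for some c ∈ ℂ² (so e(η) = −κ(η)E(η)d(η)). Then κ(η) = Ẑ(η)/y(η), and lim_{ζ→η, ζ≠η} (ζ − η)·e(ζ)/ρ(ζ) = e(η)/ρ′(η) = −(Ẑ(η)·E(η)/(y(η)·ρ′(η)))·d(η). (This is the residue condition of the matrix D(x,t,ζ) at a simple zero ηⱼ of the function ρ(ζ) = y(ζ)Ȳ(ζ̄) + z(ζ)Z̄(ζ̄).) -/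

import Mathlib

open Filter

/-- the residue condition at a simple zero `η` of the function
`ρ(ζ) = y(ζ)Ŷ(ζ) + z(ζ)Ẑ(ζ)`.  Under the stated hypotheses one has `κ(η) = Ẑ(η)/y(η)` and
`lim_{ζ→η, ζ∈U\{η}} (ζ − η)·e(ζ)/ρ(ζ) = e(η)/ρ′(η) = −(Ẑ(η)·E(η)/(y(η)·ρ′(η)))·d(η)`. -/
theorem stmt_13 (U : Set ℂ) (hU : IsOpen U) (η : ℂ) (hη : η ∈ U)
    (y yh z zh Y Yh Z Zh : ℂ → ℂ)
    (hdet : y η * yh η + z η * zh η = 1) (hy : y η ≠ 0)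
    (ρ κ : ℂ → ℂ)
    (hρdef : ρ = fun ζ => y ζ * Yh ζ + z ζ * Zh ζ)
    (hκdef : κ = fun ζ => yh ζ * Zh ζ - zh ζ * Yh ζ)
    (hρ0 : ρ η = 0) (ρ' : ℂ) (hρd : HasDerivAt ρ ρ' η) (hρ' : ρ' ≠ 0)
    (hρne : ∀ ζ ∈ U \ {η}, ρ ζ ≠ 0)
    (E : ℂ → ℂ) (hE : E η ≠ 0)
    (d e : ℂ → Fin 2 → ℂ) (he : ContinuousAt e η)
    (c : Fin 2 → ℂ) (hec : e η = ρ η • c - (κ η * E η) • d η) :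
    κ η = Zh η / y η ∧
      Tendsto (fun ζ => ((ζ - η) / ρ ζ) • e ζ) (nhdsWithin η (U \ {η}))
        (nhds (ρ'⁻¹ • e η)) ∧
      ρ'⁻¹ • e η = -((Zh η * E η) / (y η * ρ')) • d η := by
  have h1 : y η * Yh η + z η * Zh η = 0 := by rw [hρdef] at hρ0; exact hρ0
  have hκ : κ η = Zh η / y η := by
    rw [hκdef]
    field_simp
    linear_combination Zh η * hdet - zh η * h1
  refine ⟨hκ, ?_, ?_⟩
  · have hslope : Tendsto (fun ζ => ρ ζ / (ζ - η)) (nhdsWithin η {η}ᶜ) (nhds ρ') := by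
      have := hasDerivAt_iff_tendsto_slope.mp hρd
      refine this.congr fun ζ => ?_
      simp [slope_def_field, div_eq_div_iff]
      rw [hρ0]
      ring
    have hinv : Tendsto (fun ζ => (ζ - η) / ρ ζ) (nhdsWithin η {η}ᶜ) (nhds ρ'⁻¹) := by
      refine (hslope.inv₀ hρ').congr fun ζ => ?_
      rw [inv_div]
    have hmono : nhdsWithin η (U \ {η}) ≤ nhdsWithin η {η}ᶜ :=
      nhdsWithin_mono _ (fun ζ hζ => hζ.2)
    exact (hinv.mono_left hmono).smul (he.tendsto.mono_left nhdsWithin_le_nhds)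
  · rw [hec, hρ0, hκ]
    funext i
    simp only [Pi.smul_apply, Pi.sub_apply, Pi.neg_apply, smul_eq_mul, zero_smul,
      Pi.zero_apply, neg_mul]
    field_simp
    ring
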